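/- For every countable ordinal α ≥ 2, the ideal conv_α is not a P⁻ ideal. -/

import Mathlib

open Set Filter Topology Ordinal

noncomputable section

/-- The derived set of `A`: the set of accumulation (limit) points of `A`. -/
def derivSet {X : Type*} [TopologicalSpace X] (A : Set X) : Set X :=
  {p | p ∈ closure (A \ {p})}

/-- The ordinal space `ω^a + 1 = [0, ω^a]` with the (order) topology. -/
abbrev OrdSpace (a : Ordinal) : Type _ := ↥(Set.Iic (omega0 ^ a))

/-- The ideal `conv_a` on `ω^a + 1`: sets with finite derived set. -/
def convIdeal (a : Ordinal) : Set (Set (OrdSpace a)) :=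
  {A | (derivSet A).Finite}

/-- `I` is an ideal of subsets. -/
structure IsIdeal {S : Type*} (I : Set (Set S)) : Prop where
  empty_mem : ∅ ∈ I
  subset_mem : ∀ {A B : Set S}, A ⊆ B → B ∈ I → A ∈ I
  union_mem : ∀ {A B : Set S}, A ∈ I → B ∈ I → A ∪ B ∈ I

/-- The subsequence of `f` indexed by `A` converges to `x`. -/
def ConvAlong {X : Type*} [TopologicalSpace X] (f : ℕ → X) (A : Set ℕ) (x : X) : Prop :=
  ∀ U ∈ nhds x, {n ∈ A | f n ∉ U}.Finite

/-- Katětov order: `J ≤_K I`, where `I` lives on `X` and `J` on `Y`. -/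
def KatetovLE {X Y : Type*} (J : Set (Set Y)) (I : Set (Set X)) : Prop :=
  ∃ f : X → Y, ∀ A ∈ J, f ⁻¹' A ∈ I

/-- `X ∈ FinBW(I)`: every sequence in `X` has a convergent subsequence indexed
by an `I`-positive set. -/
def InFinBW (I : Set (Set ℕ)) (X : Type*) [TopologicalSpace X] : Prop :=
  ∀ f : ℕ → X, ∃ A : Set ℕ, A ∉ I ∧ ∃ x : X, ConvAlong f A x

/-- The property `P⁻` for an ideal. -/
def PMinus {S : Type*} (I : Set (Set S)) : Prop :=
  ∀ C : Set S, C ∉ I →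
    ∀ P : Set (Set S), (∀ A ∈ P, A ∈ I) → ⋃₀ P = C →
      (∀ A ∈ P, ∀ B ∈ P, A ≠ B → Disjoint A B) →
      ∃ B ⊆ C, B ∉ I ∧ ∀ A ∈ P, (B ∩ A).Finite

namespace Stmt17Aux

open Ordinal Set

/-- The `k`-th block `[ω·k, ω·k+ω)` in the ordinals. -/
def blk (k : ℕ) : Set Ordinal := Set.Ico (omega0 * k) (omega0 * k + omega0)

lemma blk_end_eq (k : ℕ) : omega0 * k + omega0 = omega0 * ((k : Ordinal) + 1) := by
  rw [mul_add, mul_one]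

lemma blk_lt_sq {k : ℕ} {x : Ordinal} (hx : x ∈ blk k) : x < omega0 * omega0 := by
  have h1 : x < omega0 * ((k : Ordinal) + 1) := (blk_end_eq k) ▸ hx.2
  have h2 : omega0 * ((k : Ordinal) + 1) ≤ omega0 * omega0 := by
    refine (mul_le_mul_iff_right₀ omega0_pos).2 ?_
    exact_mod_cast (nat_lt_omega0 (k + 1)).le
  exact h1.trans_le h2

lemma exists_mem_blk {x : Ordinal} (hx : x < omega0 * omega0) : ∃ k : ℕ, x ∈ blk k := by
  have hdiv : x / omega0 < omega0 := (div_lt omega0_ne_zero).2 hx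
  obtain ⟨k, hk⟩ := lt_omega0.1 hdiv
  refine ⟨k, ?_, ?_⟩
  · rw [← hk]; exact mul_div_le x omega0
  · have h := lt_mul_succ_div x omega0_ne_zero
    rwa [hk, ← add_one_eq_succ, mul_add, mul_one] at h

lemma blk_disj_aux {j k : ℕ} (h : j < k) {x : Ordinal}
    (hj : x ∈ blk j) (hk : x ∈ blk k) : False := by
  have h1 : omega0 * j + omega0 ≤ omega0 * k := by
    rw [blk_end_eq]
    refine (mul_le_mul_iff_right₀ omega0_pos).2 ?_
    exact_mod_cast Nat.succ_le_of_lt h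
  exact absurd hk.1 (not_le.2 (hj.2.trans_le h1))

lemma blk_disjoint {j k : ℕ} (h : j ≠ k) : Disjoint (blk j) (blk k) := by
  rcases h.lt_or_gt with h' | h'
  · exact Set.disjoint_left.2 fun x hx hx' => (blk_disj_aux h' hx hx').elim
  · exact Set.disjoint_left.2 fun x hx hx' => (blk_disj_aux h' hx' hx).elim

/-- Key negative lemma for blocks: any accumulation point of a subset of a block
is the endpoint `ω·k+ω`. -/
lemma eq_of_mem_closure_blk {k : ℕ} {p : Ordinal} {t : Set Ordinal}
    (ht : t ⊆ blk k \ {p}) (hp : p ∈ closure t) : p = omega0 * k + omega0 := by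
  by_contra hne
  rcases le_or_gt p (omega0 * k) with h | h
  · -- p ≤ ω·k : every element of t is > p, in fact ≥ p+1
    have hbd : p ∈ Ici (p + 1) := by
      refine closure_minimal (fun x hx => ?_) isClosed_Ici hp
      have hge : p ≤ x := h.trans (ht hx).1.1
      have hnex : x ≠ p := (ht hx).2
      simp only [mem_Ici, add_one_eq_succ, Order.succ_le_iff]
      exact lt_of_le_of_ne hge (Ne.symm hnex)
    have : p < p + 1 := by rw [add_one_eq_succ]; exact Order.lt_succ p
    exact absurd hbd (not_le.2 this)
  rcases lt_trichotomy p (omega0 * k + omega0) with h2 | h2 | h2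
  · -- ω·k < p < ω·k+ω : p is a successor ordinal, isolated
    have he : omega0 * k + (p - omega0 * k) = p := Ordinal.add_sub_cancel_of_le h.le
    have helt : p - omega0 * k < omega0 := by
      have := h2
      rw [← he, add_lt_add_iff_left] at this
      exact this
    obtain ⟨m, hm⟩ := lt_omega0.1 helt
    have hm0 : m ≠ 0 := by
      rintro rfl
      rw [hm] at he
      simp at he
      exact absurd he.symm (ne_of_gt h)
    set q : Ordinal := omega0 * k + (m - 1 : ℕ) with hq
    have hqp : q + 1 = p := by
      rw [hq, add_assoc, ← he, hm]
      congr 1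
      exact_mod_cast Nat.succ_pred_eq_of_pos (Nat.pos_of_ne_zero hm0)
    have hqlt : q < p := by rw [← hqp, add_one_eq_succ]; exact Order.lt_succ q
    have hplt : p < p + 1 := by rw [add_one_eq_succ]; exact Order.lt_succ p
    obtain ⟨x, hxU, hxt⟩ := (mem_closure_iff.1 hp) (Ioo q (p + 1)) isOpen_Ioo ⟨hqlt, hplt⟩
    have hx1 : x ≤ p := by
      have := hxU.2
      rw [add_one_eq_succ, Order.lt_succ_iff] at this
      exact this
    have hx2 : x < p := lt_of_le_of_ne hx1 (ht hxt).2
    have hx3 : x ≤ q := by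
      rw [← hqp, add_one_eq_succ, Order.lt_succ_iff] at hx2
      exact hx2
    exact absurd hxU.1 (not_lt.2 hx3)
  · exact hne h2
  · -- p > ω·k+ω : t is bounded below the endpoint
    have hbd : p ∈ Iic (omega0 * k + omega0) :=
      closure_minimal (fun x hx => ((ht hx).1.2).le) isClosed_Iic hp
    exact absurd hbd (not_le.2 h2)

/-- Key negative lemma for selectors: a set below `ω·ω` meeting each `Iio (ω·n)`
finitely has no accumulation point except possibly `ω·ω`. -/
lemma eq_of_mem_closure_fin {p : Ordinal} {t : Set Ordinal}
    (ht : t ⊆ Iio (omega0 * omega0) \ {p})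
    (hfin : ∀ n : ℕ, (t ∩ Iio (omega0 * n)).Finite)
    (hp : p ∈ closure t) : p = omega0 * omega0 := by
  by_contra hne
  have hle : p ≤ omega0 * omega0 :=
    closure_minimal (fun x hx => ((ht hx).1).le) isClosed_Iic hp
  have hlt : p < omega0 * omega0 := lt_of_le_of_ne hle hne
  obtain ⟨n, hn⟩ : ∃ n : ℕ, p < omega0 * n := by
    have hdiv : p / omega0 < omega0 := (div_lt omega0_ne_zero).2 hlt
    obtain ⟨k, hk⟩ := lt_omega0.1 hdiv
    refine ⟨k + 1, ?_⟩
    have h := lt_mul_succ_div p omega0_ne_zero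
    rw [hk, ← add_one_eq_succ] at h
    rw [Nat.cast_add_one]
    exact h
  have hsplit : p ∈ closure (t ∩ Iio (omega0 * n)) ∪ closure (t \ Iio (omega0 * n)) := by
    rw [← closure_union, Set.inter_union_diff]; exact hp
  rcases hsplit with h | h
  · rw [(hfin n).isClosed.closure_eq] at h
    exact absurd rfl ((ht h.1).2)
  · have hbd : p ∈ Ici (omega0 * (n : Ordinal)) :=
      closure_minimal (fun x hx => not_lt.1 hx.2) isClosed_Ici h
    exact absurd hn (not_lt.2 hbd)

/-- Positive lemma: a limit ordinal whose predecessors' successors all lie in `t`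
is in the closure of `t`. -/
lemma limit_mem_closure {p : Ordinal} (hlim : Order.IsSuccLimit p) {t : Set Ordinal}
    (ht : ∀ x < p, x + 1 ∈ t) : p ∈ closure t := by
  rw [mem_closure_iff_nhds]
  intro U hU
  obtain ⟨l, hl, hsub⟩ := exists_Ioc_subset_of_mem_nhds hU ⟨0, hlim.pos⟩
  refine ⟨l + 1, hsub ⟨?_, ?_⟩, ht l hl⟩
  · rw [add_one_eq_succ]; exact Order.lt_succ l
  · rw [add_one_eq_succ]; exact (hlim.succ_lt hl).le

end Stmt17Aux

open Stmt17Aux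

/-- `conv_α` is not a `P⁻` ideal for any countable `α ≥ 2`. -/
theorem stmt17 (a : Ordinal) (ha : 2 ≤ a) (hac : a.card ≤ Cardinal.aleph0) :
    ¬ PMinus (convIdeal a) := by
  intro hP
  have hsq : omega0 * omega0 ≤ omega0 ^ a := by
    calc omega0 * omega0 = omega0 ^ (2 : Ordinal) := by
          rw [show (2 : Ordinal) = 1 + 1 from (one_add_one_eq_two).symm, opow_add, opow_one]
      _ ≤ omega0 ^ a := opow_le_opow_right omega0_pos ha
  -- the positive set C and partition into blocks
  set C : Set (OrdSpace a) := {x | (x : Ordinal) < omega0 * omega0} with hCdef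
  set blkS : ℕ → Set (OrdSpace a) := fun k => {x | (x : Ordinal) ∈ blk k} with hblkSdef
  -- C is not in the ideal: the points ω·n+ω are accumulation points of C
  have hptlt : ∀ n : ℕ, omega0 * n + omega0 < omega0 * omega0 := by
    intro n
    rw [blk_end_eq]
    exact (mul_lt_mul_iff_right₀ omega0_pos).2 (by exact_mod_cast nat_lt_omega0 (n + 1))
  have hptle : ∀ n : ℕ, omega0 * n + omega0 ≤ omega0 ^ a := fun n => (hptlt n).le.trans hsq
  set pt : ℕ → OrdSpace a := fun n => ⟨omega0 * n + omega0, hptle n⟩ with hptdef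
  have hptmono : ∀ {n m : ℕ}, n < m → omega0 * n + omega0 < omega0 * m + omega0 := by
    intro n m h
    have h1 : omega0 * n + omega0 ≤ omega0 * m := by
      rw [blk_end_eq]
      exact (mul_le_mul_iff_right₀ omega0_pos).2 (by exact_mod_cast Nat.succ_le_of_lt h)
    have h2 : omega0 * (m : Ordinal) < omega0 * m + omega0 := by
      conv_lhs => rw [← add_zero (omega0 * (m : Ordinal))]
      exact (add_lt_add_iff_left _).2 omega0_pos
    exact h1.trans_lt h2
  have hptinj : Function.Injective pt := by
    intro n m h
    rcases lt_trichotomy n m with h' | h' | h'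
    · exact absurd (congrArg Subtype.val h) (ne_of_lt (hptmono h'))
    · exact h'
    · exact absurd (congrArg Subtype.val h).symm (ne_of_lt (hptmono h'))
  have hptmem : ∀ n : ℕ, pt n ∈ derivSet C := by
    intro n
    show pt n ∈ closure (C \ {pt n})
    rw [closure_subtype]
    refine limit_mem_closure (isSuccLimit_add _ isSuccLimit_omega0) ?_
    intro x hx
    have hx1 : x + 1 < omega0 * n + omega0 := by
      rw [add_one_eq_succ]; exact (isSuccLimit_add _ isSuccLimit_omega0).succ_lt hx
    have hx2 : x + 1 < omega0 * omega0 := hx1.trans (hptlt n)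
    refine ⟨⟨x + 1, hx2.le.trans hsq⟩, ⟨hx2, ?_⟩, rfl⟩
    intro hcon
    have := congrArg Subtype.val hcon
    simp only at this
    exact absurd this (ne_of_lt hx1)
  have hC : C ∉ convIdeal a := by
    intro hfin
    exact (Set.infinite_of_injective_forall_mem hptinj hptmem) hfin
  -- the partition
  set P : Set (Set (OrdSpace a)) := Set.range blkS with hPdef
  have hPI : ∀ A ∈ P, A ∈ convIdeal a := by
    rintro A ⟨k, rfl⟩
    have hsub : derivSet (blkS k) ⊆ {p : OrdSpace a | (p : Ordinal) = omega0 * k + omega0} := by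
      intro p hp
      have hp' : (p : Ordinal) ∈ closure (Subtype.val '' (blkS k \ {p})) := by
        rw [← closure_subtype]; exact hp
      refine eq_of_mem_closure_blk (k := k) ?_ hp'
      rintro x ⟨q, ⟨hq1, hq2⟩, rfl⟩
      exact ⟨hq1, fun h => hq2 (Subtype.ext h)⟩
    refine Set.Finite.subset ?_ hsub
    exact Set.Subsingleton.finite fun x hx y hy => Subtype.ext (hx.trans hy.symm)
  have hPU : ⋃₀ P = C := by
    rw [hPdef, Set.sUnion_range]
    ext x
    simp only [Set.mem_iUnion]
    constructor
    · rintro ⟨k, hk⟩; exact blk_lt_sq hk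
    · intro hx; exact exists_mem_blk hx
  have hPD : ∀ A ∈ P, ∀ B ∈ P, A ≠ B → Disjoint A B := by
    rintro A ⟨j, rfl⟩ B ⟨k, rfl⟩ hAB
    have hjk : j ≠ k := fun h => hAB (by rw [h])
    exact Set.disjoint_left.2 fun x hx hx' => (Set.disjoint_left.1 (blk_disjoint hjk) hx hx')
  obtain ⟨B, hBC, hBpos, hBfin⟩ := hP C hC P hPI hPU hPD
  apply hBpos
  -- B has at most one accumulation point, namely ω·ω
  have hsub : derivSet B ⊆ {p : OrdSpace a | (p : Ordinal) = omega0 * omega0} := by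
    intro p hp
    have hp' : (p : Ordinal) ∈ closure (Subtype.val '' (B \ {p})) := by
      rw [← closure_subtype]; exact hp
    refine eq_of_mem_closure_fin ?_ ?_ hp'
    · rintro x ⟨q, ⟨hq1, hq2⟩, rfl⟩
      exact ⟨hBC hq1, fun h => hq2 (Subtype.ext h)⟩
    · intro n
      have hsub2 : Subtype.val '' (B \ {p}) ∩ Iio (omega0 * n) ⊆
          Subtype.val '' (⋃ k ∈ Finset.range n, B ∩ blkS k) := by
        rintro x ⟨⟨q, ⟨hq1, _⟩, rfl⟩, hxlt⟩
        obtain ⟨k, hk⟩ := exists_mem_blk (hBC hq1)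
        have hkn : k < n := by
          have h1 : omega0 * (k : Ordinal) < omega0 * n := lt_of_le_of_lt hk.1 hxlt
          exact_mod_cast (mul_lt_mul_iff_right₀ omega0_pos).1 h1
        exact ⟨q, Set.mem_biUnion (Finset.mem_range.2 hkn) ⟨hq1, hk⟩, rfl⟩
      refine Set.Finite.subset (Set.Finite.image _ ?_) hsub2
      refine Set.Finite.biUnion (Finset.range n).finite_toSet ?_
      intro k _
      exact hBfin (blkS k) ⟨k, rfl⟩
  refine Set.Finite.subset ?_ hsub
  exact Set.Subsingleton.finite fun x hx y hy => Subtype.ext (hx.trans hy.symm)
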